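/- Define MK_λ(K,K')² := inf over couplings Q ∈ C(K,K') of trace(Q^{1/2} C_λ Q^{1/2}). Then for all density operators R, R' with finite second moments (position and momentum), MK_λ(R^λ, (R')^λ)² = λ · MK_1(R,R')², where R^λ := S_λ R S_λ*. -/

import Mathlib

open MeasureTheory Complex

noncomputable section

/-- The direction `(e_j, -e_j)` implementing `∂_{x_j} - ∂_{x'_j}` on `ℝ^ι × ℝ^ι`. -/
def vdir {ι : Type*} [Fintype ι] [DecidableEq ι] (j : ι) :
    EuclideanSpace ℝ ι × EuclideanSpace ℝ ι :=
  (EuclideanSpace.single j (1 : ℝ), -EuclideanSpace.single j (1 : ℝ))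

/-- `(∂_{x_j} - ∂_{x'_j})` applied in the first variable of a kernel. -/
def D1 {ι : Type*} [Fintype ι] [DecidableEq ι] (j : ι)
    (q : (EuclideanSpace ℝ ι × EuclideanSpace ℝ ι) →
         (EuclideanSpace ℝ ι × EuclideanSpace ℝ ι) → ℂ) :
    (EuclideanSpace ℝ ι × EuclideanSpace ℝ ι) →
    (EuclideanSpace ℝ ι × EuclideanSpace ℝ ι) → ℂ :=
  fun z w => fderiv ℝ (fun z' => q z' w) z (vdir j)

/-- `(∂_{y_j} - ∂_{y'_j})` applied in the second variable of a kernel. -/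
def D2 {ι : Type*} [Fintype ι] [DecidableEq ι] (j : ι)
    (q : (EuclideanSpace ℝ ι × EuclideanSpace ℝ ι) →
         (EuclideanSpace ℝ ι × EuclideanSpace ℝ ι) → ℂ) :
    (EuclideanSpace ℝ ι × EuclideanSpace ℝ ι) →
    (EuclideanSpace ℝ ι × EuclideanSpace ℝ ι) → ℂ :=
  fun z w => fderiv ℝ (fun w' => q z w') w (vdir j)

/-- Transport cost `trace(Q^{1/2} C_λ Q^{1/2})` of a coupling with kernel `q`, computed
from the kernel: `∫ (|x-x'|² q(z,z) + λ² Σ_j ((∂_{x_j}-∂_{x'_j})⊗(∂_{y_j}-∂_{y'_j}) q)(z,z)) dz`,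
where `C_λ = |x-x'|² - λ²|∇_x - ∇_{x'}|²`. -/
def mkCost {ι : Type*} [Fintype ι] [DecidableEq ι] (lam : ℝ)
    (q : (EuclideanSpace ℝ ι × EuclideanSpace ℝ ι) →
         (EuclideanSpace ℝ ι × EuclideanSpace ℝ ι) → ℂ) : ℝ :=
  ∫ z : EuclideanSpace ℝ ι × EuclideanSpace ℝ ι,
    (((‖z.1 - z.2‖ ^ 2 : ℝ) : ℂ) * q z z
      + ((lam ^ 2 : ℝ) : ℂ) * ∑ j, D1 j (D2 j q) z z).re

/-- A coupling of two density operators with kernels `r, r'`: a density operator on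
`L²(ℝ^ι) ⊗ L²(ℝ^ι)` whose marginals (partial traces) are `r` and `r'`. -/
structure IsCoupling {ι : Type*} [Fintype ι]
    (r r' : EuclideanSpace ℝ ι → EuclideanSpace ℝ ι → ℂ)
    (q : (EuclideanSpace ℝ ι × EuclideanSpace ℝ ι) →
         (EuclideanSpace ℝ ι × EuclideanSpace ℝ ι) → ℂ) : Prop where
  memL2 : MemLp (fun z : (EuclideanSpace ℝ ι × EuclideanSpace ℝ ι) ×
    (EuclideanSpace ℝ ι × EuclideanSpace ℝ ι) => q z.1 z.2) 2 volume
  selfAdjoint : ∀ z w, q z w = (starRingEnd ℂ) (q w z)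
  pos : ∀ χ : EuclideanSpace ℝ ι × EuclideanSpace ℝ ι → ℂ,
    0 ≤ (∫ z, ∫ w, (starRingEnd ℂ) (χ z) * q z w * χ w).re
  diag_int : Integrable (fun z : EuclideanSpace ℝ ι × EuclideanSpace ℝ ι => q z z)
  trace_one : ∫ z : EuclideanSpace ℝ ι × EuclideanSpace ℝ ι, q z z = 1
  marginal_fst : ∀ x y, (∫ z, q (x, z) (y, z)) = r x y
  marginal_snd : ∀ x y, (∫ z, q (z, x) (z, y)) = r' x y

/-- The squared quantum pseudo-distance
`MK_λ(R,R')² := inf_{Q ∈ C(R,R')} trace(Q^{1/2} C_λ Q^{1/2})`. -/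
def MKsq {ι : Type*} [Fintype ι] [DecidableEq ι] (lam : ℝ)
    (r r' : EuclideanSpace ℝ ι → EuclideanSpace ℝ ι → ℂ) : ℝ :=
  sInf (mkCost lam '' {q | IsCoupling r r' q})

/-- `∂_{x_j}` in the first variable of a one-particle kernel. -/
def d1 {ι : Type*} [Fintype ι] [DecidableEq ι] (j : ι)
    (r : EuclideanSpace ℝ ι → EuclideanSpace ℝ ι → ℂ) :
    EuclideanSpace ℝ ι → EuclideanSpace ℝ ι → ℂ :=
  fun x y => fderiv ℝ (fun x' => r x' y) x (EuclideanSpace.single j (1 : ℝ))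

/-- `∂_{y_j}` in the second variable of a one-particle kernel. -/
def d2 {ι : Type*} [Fintype ι] [DecidableEq ι] (j : ι)
    (r : EuclideanSpace ℝ ι → EuclideanSpace ℝ ι → ℂ) :
    EuclideanSpace ℝ ι → EuclideanSpace ℝ ι → ℂ :=
  fun x y => fderiv ℝ (fun y' => r x y') y (EuclideanSpace.single j (1 : ℝ))

/-- `R ∈ D²(L²(ℝ^ι))`: a density-operator kernel with finite second moments in
position and momentum. -/
structure IsDensity2 {ι : Type*} [Fintype ι] [DecidableEq ι]
    (r : EuclideanSpace ℝ ι → EuclideanSpace ℝ ι → ℂ) : Prop where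
  memL2 : MemLp (fun z : EuclideanSpace ℝ ι × EuclideanSpace ℝ ι => r z.1 z.2) 2 volume
  selfAdjoint : ∀ x y, r x y = (starRingEnd ℂ) (r y x)
  pos : ∀ χ : EuclideanSpace ℝ ι → ℂ,
    0 ≤ (∫ x, ∫ y, (starRingEnd ℂ) (χ x) * r x y * χ y).re
  diag_int : Integrable (fun x : EuclideanSpace ℝ ι => r x x)
  trace_one : ∫ x, r x x = 1
  moment_pos : Integrable (fun x : EuclideanSpace ℝ ι => ((‖x‖ ^ 2 : ℝ) : ℂ) * r x x)
  moment_mom : Integrable (fun x : EuclideanSpace ℝ ι => ∑ j, d1 j (d2 j r) x x)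

/-- Integral kernel of `R^λ := S_λ R S_λ*`: `λ^{-d/2} r(x/√λ, y/√λ)`. -/
def kernelScale {ι : Type*} [Fintype ι] (lam : ℝ)
    (r : EuclideanSpace ℝ ι → EuclideanSpace ℝ ι → ℂ)
    (x y : EuclideanSpace ℝ ι) : ℂ :=
  ((lam ^ (-(Fintype.card ι : ℝ) / 2) : ℝ) : ℂ) *
    r ((Real.sqrt lam)⁻¹ • x) ((Real.sqrt lam)⁻¹ • y)

/-! ### Auxiliary lemmas -/

section FDerivAux

variable {F : Type*} [NormedAddCommGroup F] [NormedSpace ℝ F]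

lemma fderiv_cm (c : ℂ) (hc : c ≠ 0) (f : F → ℂ) (z v : F) :
    fderiv ℝ (fun z' => c * f z') z v = c * fderiv ℝ f z v := by
  by_cases h : DifferentiableAt ℝ f z
  · rw [fderiv_const_mul h c]; simp
  · have h2 : ¬ DifferentiableAt ℝ (fun z' => c * f z') z := by
      intro h2
      exact h (by simpa [← mul_assoc, inv_mul_cancel₀ hc] using h2.const_mul c⁻¹)
    rw [fderiv_zero_of_not_differentiableAt h, fderiv_zero_of_not_differentiableAt h2]
    simp

lemma fderiv_smul_arg (s : ℝ) (hs : s ≠ 0) (f : F → ℂ) (z v : F) :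
    fderiv ℝ (fun z' => f (s • z')) z v = s • fderiv ℝ f (s • z) v := by
  have hL : HasFDerivAt (fun z' : F => s • z') (s • ContinuousLinearMap.id ℝ F) z := by
    have := (s • ContinuousLinearMap.id ℝ F).hasFDerivAt (x := z)
    exact this
  by_cases h : DifferentiableAt ℝ f (s • z)
  · have h2 := (h.hasFDerivAt.comp z hL)
    have h4 : HasFDerivAt (fun z' => f (s • z'))
        ((fderiv ℝ f (s • z)).comp (s • ContinuousLinearMap.id ℝ F)) z := h2
    rw [h4.fderiv]
    simp [ContinuousLinearMap.smul_apply, _root_.map_smul]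
  · have h2 : ¬ DifferentiableAt ℝ (fun z' => f (s • z')) z := by
      intro h2
      have hinner : DifferentiableAt ℝ (fun u : F => s⁻¹ • u) (s • z) :=
        (differentiable_id.const_smul s⁻¹).differentiableAt
      have h2' : DifferentiableAt ℝ (fun z' => f (s • z')) (s⁻¹ • (s • z)) := by
        rwa [inv_smul_smul₀ hs]
      have h3 := DifferentiableAt.comp (s • z) h2' hinner
      apply h
      have heq : ((fun z' => f (s • z')) ∘ fun u : F => s⁻¹ • u) = f := by
        funext u; simp [Function.comp, smul_inv_smul₀ hs]
      rwa [heq] at h3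
    rw [fderiv_zero_of_not_differentiableAt h, fderiv_zero_of_not_differentiableAt h2]
    simp

end FDerivAux

lemma memℒp_comp_smul {E : Type*} [NormedAddCommGroup E] [NormedSpace ℝ E]
    [MeasurableSpace E] [BorelSpace E] [FiniteDimensional ℝ E]
    (μ : Measure E) [μ.IsAddHaarMeasure]
    {G : Type*} [NormedAddCommGroup G] {f : E → G} (hf : MemLp f 2 μ)
    {s : ℝ} (hs : s ≠ 0) : MemLp (fun x => f (s • x)) 2 μ := by
  let t := ((Homeomorph.smul (isUnit_iff_ne_zero.2 hs).unit).toMeasurableEquiv : E ≃ᵐ E)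
  have hmap : MemLp f 2 (Measure.map (s • ·) μ) := by
    rw [Measure.map_addHaar_smul μ hs]
    exact hf.smul_measure ENNReal.ofReal_ne_top
  exact (t.memLp_map_measure_iff).mp (hmap : MemLp f 2 (Measure.map t μ))

/-! ### The scaled coupling -/

abbrev E1 (d : ℕ) := EuclideanSpace ℝ (Fin d)
abbrev E2 (d : ℕ) := EuclideanSpace ℝ (Fin d) × EuclideanSpace ℝ (Fin d)

/-- Kernel of the scaled coupling `S_λ⊗S_λ Q (S_λ⊗S_λ)*`. -/
def Qs (d : ℕ) (lam : ℝ) (q : E2 d → E2 d → ℂ) : E2 d → E2 d → ℂ :=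
  fun z w => (((lam ^ d)⁻¹ : ℝ) : ℂ) *
    q ((Real.sqrt lam)⁻¹ • z) ((Real.sqrt lam)⁻¹ • w)

instance borelE2 {d : ℕ} : BorelSpace (E2 d) := Prod.borelSpace

instance borelE2E2 {d : ℕ} : BorelSpace (E2 d × E2 d) := Prod.borelSpace

instance haarE2 {d : ℕ} : (volume : Measure (E2 d)).IsAddHaarMeasure := by
  rw [Measure.volume_eq_prod]
  exact Measure.prod.instIsAddHaarMeasure _ _

instance haarE2E2 {d : ℕ} : (volume : Measure (E2 d × E2 d)).IsAddHaarMeasure := by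
  rw [Measure.volume_eq_prod]
  exact Measure.prod.instIsAddHaarMeasure _ _

section Main

variable {d : ℕ} {lam : ℝ}

lemma hsqrt_ne (hlam : 0 < lam) : Real.sqrt lam ≠ 0 :=
  ne_of_gt (Real.sqrt_pos.2 hlam)

lemma hc_ne (hlam : 0 < lam) : (((lam ^ d)⁻¹ : ℝ) : ℂ) ≠ 0 := by
  simp [pow_ne_zero, hlam.ne']

lemma hfr1 : Module.finrank ℝ (E1 d) = d := by
  simp [finrank_euclideanSpace]

lemma hfr2 : Module.finrank ℝ (E2 d) = 2 * d := by
  rw [Module.finrank_prod, hfr1, two_mul]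

lemma hAA (hlam : 0 < lam) :
    (Real.sqrt lam : ℝ) ^ (Module.finrank ℝ (E2 d)) = lam ^ d := by
  rw [hfr2, pow_mul, Real.sq_sqrt hlam.le]

lemma hA1 (hlam : 0 < lam) :
    (Real.sqrt lam : ℝ) ^ (Module.finrank ℝ (E1 d)) = Real.sqrt lam ^ d := by
  rw [hfr1]

lemma const_half (hlam : 0 < lam) :
    lam ^ (-(d : ℝ) / 2) = (Real.sqrt lam ^ d)⁻¹ := by
  rw [neg_div, Real.rpow_neg hlam.le]
  congr 1
  rw [show (d : ℝ) / 2 = (1 / 2 : ℝ) * d by ring, Real.rpow_mul hlam.le,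
    ← Real.sqrt_eq_rpow, Real.rpow_natCast]

lemma const_marg (hlam : 0 < lam) :
    ((lam ^ d)⁻¹ * Real.sqrt lam ^ d : ℝ) = lam ^ (-(d : ℝ) / 2) := by
  have hx : Real.sqrt lam ≠ 0 := hsqrt_ne hlam
  have hpow : (lam : ℝ) ^ d = Real.sqrt lam ^ d * Real.sqrt lam ^ d := by
    rw [← mul_pow, Real.mul_self_sqrt hlam.le]
  rw [const_half hlam, hpow, mul_inv, mul_assoc,
    inv_mul_cancel₀ (pow_ne_zero _ hx), mul_one]

end Main

section Deriv

variable {d : ℕ} {lam : ℝ}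

lemma D2_Qs (hlam : 0 < lam) (q : E2 d → E2 d → ℂ) (j : Fin d) (z w : E2 d) :
    D2 j (Qs d lam q) z w
      = (((lam ^ d)⁻¹ * (Real.sqrt lam)⁻¹ : ℝ) : ℂ) *
        D2 j q ((Real.sqrt lam)⁻¹ • z) ((Real.sqrt lam)⁻¹ • w) := by
  have hs : (Real.sqrt lam)⁻¹ ≠ 0 := inv_ne_zero (hsqrt_ne hlam)
  show fderiv ℝ (fun w' => Qs d lam q z w') w (vdir j) = _
  have h1 : (fun w' => Qs d lam q z w')
      = fun w' => (((lam ^ d)⁻¹ : ℝ) : ℂ) *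
        (fun u => q ((Real.sqrt lam)⁻¹ • z) u) ((Real.sqrt lam)⁻¹ • w') := rfl
  rw [h1, fderiv_cm _ (hc_ne hlam), fderiv_smul_arg _ hs]
  rw [Complex.real_smul]
  push_cast
  ring_nf
  rfl

lemma D1D2_Qs (hlam : 0 < lam) (q : E2 d → E2 d → ℂ) (j : Fin d) (z w : E2 d) :
    D1 j (D2 j (Qs d lam q)) z w
      = (((lam ^ d)⁻¹ * lam⁻¹ : ℝ) : ℂ) *
        D1 j (D2 j q) ((Real.sqrt lam)⁻¹ • z) ((Real.sqrt lam)⁻¹ • w) := by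
  have hs : (Real.sqrt lam)⁻¹ ≠ 0 := inv_ne_zero (hsqrt_ne hlam)
  have hc' : ((((lam ^ d)⁻¹ * (Real.sqrt lam)⁻¹ : ℝ)) : ℂ) ≠ 0 := by
    simp [pow_ne_zero, hlam.ne', hsqrt_ne hlam]
  show fderiv ℝ (fun z' => D2 j (Qs d lam q) z' w) z (vdir j) = _
  have h1 : (fun z' => D2 j (Qs d lam q) z' w)
      = fun z' => (((lam ^ d)⁻¹ * (Real.sqrt lam)⁻¹ : ℝ) : ℂ) *
        (fun u => D2 j q u ((Real.sqrt lam)⁻¹ • w)) ((Real.sqrt lam)⁻¹ • z') :=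
    funext fun z' => D2_Qs hlam q j z' w
  rw [h1, fderiv_cm _ hc',
    fderiv_smul_arg ((Real.sqrt lam)⁻¹) hs
      (fun u => D2 j q u ((Real.sqrt lam)⁻¹ • w)) z (vdir j)]
  have h2 : ((Real.sqrt lam : ℝ))⁻¹ * (Real.sqrt lam)⁻¹ = lam⁻¹ := by
    rw [← mul_inv, Real.mul_self_sqrt hlam.le]
  rw [show ((lam ^ d)⁻¹ * lam⁻¹ : ℝ)
      = ((lam ^ d)⁻¹ * (Real.sqrt lam)⁻¹) * (Real.sqrt lam)⁻¹ by
    rw [mul_assoc, h2]]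
  rw [Complex.real_smul]
  push_cast
  ring_nf
  rfl

end Deriv

section Cost

variable {d : ℕ} {lam : ℝ}

lemma norm_smul_diff (hlam : 0 < lam) (z : E2 d) :
    (‖z.1 - z.2‖ ^ 2 : ℝ)
      = lam * ‖((Real.sqrt lam)⁻¹ • z).1 - ((Real.sqrt lam)⁻¹ • z).2‖ ^ 2 := by
  have : ((Real.sqrt lam)⁻¹ • z).1 - ((Real.sqrt lam)⁻¹ • z).2
      = (Real.sqrt lam)⁻¹ • (z.1 - z.2) := by
    simp [Prod.smul_fst, Prod.smul_snd, smul_sub]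
  rw [this, norm_smul]
  rw [Real.norm_eq_abs, abs_inv, _root_.abs_of_nonneg (Real.sqrt_nonneg lam)]
  rw [mul_pow, inv_pow, Real.sq_sqrt hlam.le]
  field_simp

lemma mkCost_Qs (hlam : 0 < lam) (q : E2 d → E2 d → ℂ) :
    mkCost lam (Qs d lam q) = lam * mkCost 1 q := by
  have hs : (Real.sqrt lam)⁻¹ ≠ 0 := inv_ne_zero (hsqrt_ne hlam)
  have hlC : (lam : ℂ) ≠ 0 := by exact_mod_cast hlam.ne'
  have hldC : ((lam : ℂ)) ^ d ≠ 0 := pow_ne_zero _ hlC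
  unfold mkCost
  have hpt : ∀ z : E2 d,
      (((‖z.1 - z.2‖ ^ 2 : ℝ) : ℂ) * Qs d lam q z z
        + ((lam ^ 2 : ℝ) : ℂ) * ∑ j, D1 j (D2 j (Qs d lam q)) z z).re
        = (lam * (lam ^ d)⁻¹) *
          ((fun u : E2 d => ((((‖u.1 - u.2‖ ^ 2 : ℝ) : ℂ) * q u u
            + (((1 : ℝ) ^ 2 : ℝ) : ℂ) * ∑ j, D1 j (D2 j q) u u).re))
            ((Real.sqrt lam)⁻¹ • z)) := by
    intro z
    have hD : ∀ j : Fin d, D1 j (D2 j (Qs d lam q)) z z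
        = (((lam ^ d)⁻¹ * lam⁻¹ : ℝ) : ℂ) *
          D1 j (D2 j q) ((Real.sqrt lam)⁻¹ • z) ((Real.sqrt lam)⁻¹ • z) :=
      fun j => D1D2_Qs hlam q j z z
    have hcx : (((‖z.1 - z.2‖ ^ 2 : ℝ) : ℂ) * Qs d lam q z z
        + ((lam ^ 2 : ℝ) : ℂ) * ∑ j, D1 j (D2 j (Qs d lam q)) z z)
        = (((lam * (lam ^ d)⁻¹ : ℝ)) : ℂ) *
          ((((‖((Real.sqrt lam)⁻¹ • z).1 - ((Real.sqrt lam)⁻¹ • z).2‖ ^ 2 : ℝ) : ℂ) *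
              q ((Real.sqrt lam)⁻¹ • z) ((Real.sqrt lam)⁻¹ • z)
            + (((1 : ℝ) ^ 2 : ℝ) : ℂ) *
              ∑ j, D1 j (D2 j q) ((Real.sqrt lam)⁻¹ • z) ((Real.sqrt lam)⁻¹ • z))) := by
      simp only [hD, Qs, Finset.mul_sum, norm_smul_diff hlam z]
      push_cast
      rw [← Finset.mul_sum, ← Finset.mul_sum]
      field_simp
    rw [hcx, Complex.re_ofReal_mul]
  calc
    ∫ z : E2 d, (((‖z.1 - z.2‖ ^ 2 : ℝ) : ℂ) * Qs d lam q z z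
        + ((lam ^ 2 : ℝ) : ℂ) * ∑ j, D1 j (D2 j (Qs d lam q)) z z).re
      = ∫ z : E2 d, (lam * (lam ^ d)⁻¹) *
          ((fun u : E2 d => ((((‖u.1 - u.2‖ ^ 2 : ℝ) : ℂ) * q u u
            + (((1 : ℝ) ^ 2 : ℝ) : ℂ) * ∑ j, D1 j (D2 j q) u u).re))
            ((Real.sqrt lam)⁻¹ • z)) :=
        integral_congr_ae (Filter.Eventually.of_forall hpt)
    _ = (lam * (lam ^ d)⁻¹) * ∫ z : E2 d,
          ((fun u : E2 d => ((((‖u.1 - u.2‖ ^ 2 : ℝ) : ℂ) * q u u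
            + (((1 : ℝ) ^ 2 : ℝ) : ℂ) * ∑ j, D1 j (D2 j q) u u).re))
            ((Real.sqrt lam)⁻¹ • z)) := integral_const_mul _ _
    _ = (lam * (lam ^ d)⁻¹) * ((lam ^ d : ℝ) • ∫ u : E2 d,
          (((‖u.1 - u.2‖ ^ 2 : ℝ) : ℂ) * q u u
            + (((1 : ℝ) ^ 2 : ℝ) : ℂ) * ∑ j, D1 j (D2 j q) u u).re) := by
        rw [Measure.integral_comp_inv_smul_of_nonneg volume
          (fun u : E2 d => ((((‖u.1 - u.2‖ ^ 2 : ℝ) : ℂ) * q u u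
            + (((1 : ℝ) ^ 2 : ℝ) : ℂ) * ∑ j, D1 j (D2 j q) u u).re))
          (Real.sqrt_nonneg lam), hAA hlam]
    _ = lam * ∫ u : E2 d,
          (((‖u.1 - u.2‖ ^ 2 : ℝ) : ℂ) * q u u
            + (((1 : ℝ) ^ 2 : ℝ) : ℂ) * ∑ j, D1 j (D2 j q) u u).re := by
        rw [smul_eq_mul]
        have hld : (lam : ℝ) ^ d ≠ 0 := pow_ne_zero _ hlam.ne'
        field_simp

end Cost

section Coupling

variable {d : ℕ} {lam : ℝ}

lemma isCoupling_Qs (hlam : 0 < lam) {a b : E1 d → E1 d → ℂ} {q : E2 d → E2 d → ℂ}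
    (h : IsCoupling a b q) :
    IsCoupling (kernelScale lam a) (kernelScale lam b) (Qs d lam q) := by
  have hsq : Real.sqrt lam ≠ 0 := hsqrt_ne hlam
  have hs : (Real.sqrt lam)⁻¹ ≠ 0 := inv_ne_zero hsq
  have hld : (lam : ℝ) ^ d ≠ 0 := pow_ne_zero _ hlam.ne'
  constructor
  · -- memL2
    have hcomp := memℒp_comp_smul (μ := (volume : Measure (E2 d × E2 d)))
      (f := fun z : E2 d × E2 d => q z.1 z.2) h.memL2 hs
    have := hcomp.const_mul ((((lam ^ d)⁻¹ : ℝ)) : ℂ)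
    exact this
  · -- selfAdjoint
    intro z w
    rw [Qs, Qs, h.selfAdjoint]
    simp [map_mul, Complex.conj_ofReal]
  · -- pos
    intro χ
    set η : E2 d → ℂ := fun u => χ (Real.sqrt lam • u) with hη
    have hηχ : ∀ u : E2 d, η ((Real.sqrt lam)⁻¹ • u) = χ u := by
      intro u; simp only [hη]; rw [smul_inv_smul₀ hsq]
    have key : (∫ z, ∫ w, (starRingEnd ℂ) (χ z) * Qs d lam q z w * χ w)
        = (((lam ^ d : ℝ)) : ℂ) * ∫ z, ∫ w, (starRingEnd ℂ) (η z) * q z w * η w := by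
      calc
        (∫ z, ∫ w, (starRingEnd ℂ) (χ z) * Qs d lam q z w * χ w)
          = ∫ z : E2 d, (lam ^ d : ℝ) •
              ((fun u : E2 d => ∫ w, (starRingEnd ℂ) (η u)
                * ((((lam ^ d)⁻¹ : ℝ) : ℂ) * q u w) * η w) ((Real.sqrt lam)⁻¹ • z)) := by
            refine integral_congr_ae (Filter.Eventually.of_forall fun z => ?_)
            have hin := Measure.integral_comp_inv_smul_of_nonneg (volume : Measure (E2 d))
              (fun w => (starRingEnd ℂ) (η ((Real.sqrt lam)⁻¹ • z))
                * ((((lam ^ d)⁻¹ : ℝ) : ℂ) * q ((Real.sqrt lam)⁻¹ • z) w) * η w)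
              (Real.sqrt_nonneg lam)
            rw [hAA hlam] at hin
            have e1 : (∫ w, (starRingEnd ℂ) (χ z) * Qs d lam q z w * χ w)
                = ∫ w : E2 d, (fun w => (starRingEnd ℂ) (η ((Real.sqrt lam)⁻¹ • z))
                    * ((((lam ^ d)⁻¹ : ℝ) : ℂ) * q ((Real.sqrt lam)⁻¹ • z) w) * η w)
                    ((Real.sqrt lam)⁻¹ • w) := by
              refine integral_congr_ae (Filter.Eventually.of_forall fun w => ?_)
              simp only [Qs]
              rw [hηχ z, hηχ w]
            beta_reduce
            rw [e1, hin]
        _ = (lam ^ d : ℝ) • ∫ z : E2 d,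
              ((fun u : E2 d => ∫ w, (starRingEnd ℂ) (η u)
                * ((((lam ^ d)⁻¹ : ℝ) : ℂ) * q u w) * η w) ((Real.sqrt lam)⁻¹ • z)) :=
            integral_smul _ _
        _ = (lam ^ d : ℝ) • ((lam ^ d : ℝ) •
              ∫ u : E2 d, ∫ w, (starRingEnd ℂ) (η u)
                * ((((lam ^ d)⁻¹ : ℝ) : ℂ) * q u w) * η w) := by
            rw [Measure.integral_comp_inv_smul_of_nonneg (volume : Measure (E2 d))
              (fun u : E2 d => ∫ w, (starRingEnd ℂ) (η u)
                * ((((lam ^ d)⁻¹ : ℝ) : ℂ) * q u w) * η w) (Real.sqrt_nonneg lam),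
              hAA hlam]
        _ = (lam ^ d : ℝ) • ((lam ^ d : ℝ) • ((((lam ^ d)⁻¹ : ℝ) : ℂ) *
              ∫ u : E2 d, ∫ w, (starRingEnd ℂ) (η u) * q u w * η w)) := by
            congr 2
            calc
              (∫ u : E2 d, ∫ w, (starRingEnd ℂ) (η u)
                  * ((((lam ^ d)⁻¹ : ℝ) : ℂ) * q u w) * η w)
                = ∫ u : E2 d, (((lam ^ d)⁻¹ : ℝ) : ℂ) *
                    ∫ w, (starRingEnd ℂ) (η u) * q u w * η w := by
                  refine integral_congr_ae (Filter.Eventually.of_forall fun u => ?_)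
                  beta_reduce
                  rw [← integral_const_mul]
                  exact integral_congr_ae (Filter.Eventually.of_forall fun w => by ring)
              _ = (((lam ^ d)⁻¹ : ℝ) : ℂ) *
                    ∫ u : E2 d, ∫ w, (starRingEnd ℂ) (η u) * q u w * η w :=
                  integral_const_mul _ _
        _ = (((lam ^ d : ℝ)) : ℂ) * ∫ z, ∫ w, (starRingEnd ℂ) (η z) * q z w * η w := by
            have hconst : ((lam ^ d * lam ^ d) * (lam ^ d)⁻¹ : ℝ) = lam ^ d := by
              field_simp
            rw [smul_smul, Complex.real_smul, ← mul_assoc, ← Complex.ofReal_mul, hconst]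
    rw [key, Complex.re_ofReal_mul]
    exact mul_nonneg (pow_nonneg hlam.le d) (h.pos η)
  · -- diag_int
    have hint : Integrable (fun z : E2 d => q z z) := h.diag_int
    have := (hint.comp_smul (R := (Real.sqrt lam)⁻¹) hs).const_mul
      ((((lam ^ d)⁻¹ : ℝ)) : ℂ)
    exact this
  · -- trace_one
    have hin := Measure.integral_comp_inv_smul_of_nonneg (volume : Measure (E2 d))
      (fun u : E2 d => q u u) (Real.sqrt_nonneg lam)
    rw [hAA hlam, h.trace_one] at hin
    calc
      (∫ z : E2 d, Qs d lam q z z)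
        = (((lam ^ d)⁻¹ : ℝ) : ℂ) *
            ∫ z : E2 d, (fun u : E2 d => q u u) ((Real.sqrt lam)⁻¹ • z) :=
          integral_const_mul _ _
      _ = 1 := by
          rw [hin, Complex.real_smul, mul_one, ← Complex.ofReal_mul,
            inv_mul_cancel₀ hld, Complex.ofReal_one]
  · -- marginal_fst
    intro x y
    have hin := Measure.integral_comp_inv_smul_of_nonneg (volume : Measure (E1 d))
      (fun u : E1 d => q ((Real.sqrt lam)⁻¹ • x, u) ((Real.sqrt lam)⁻¹ • y, u))
      (Real.sqrt_nonneg lam)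
    rw [hA1 hlam, h.marginal_fst] at hin
    calc
      (∫ z, Qs d lam q (x, z) (y, z))
        = (((lam ^ d)⁻¹ : ℝ) : ℂ) * ∫ z : E1 d,
            (fun u : E1 d => q ((Real.sqrt lam)⁻¹ • x, u) ((Real.sqrt lam)⁻¹ • y, u))
              ((Real.sqrt lam)⁻¹ • z) := by
          rw [← integral_const_mul]
          refine integral_congr_ae (Filter.Eventually.of_forall fun z => ?_)
          simp only [Qs, Prod.smul_mk]
      _ = kernelScale lam a x y := by
          rw [hin, Complex.real_smul, kernelScale]
          rw [show (Fintype.card (Fin d) : ℝ) = (d : ℝ) by simp]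
          rw [← const_marg hlam]
          push_cast
          ring
  · -- marginal_snd
    intro x y
    have hin := Measure.integral_comp_inv_smul_of_nonneg (volume : Measure (E1 d))
      (fun u : E1 d => q (u, (Real.sqrt lam)⁻¹ • x) (u, (Real.sqrt lam)⁻¹ • y))
      (Real.sqrt_nonneg lam)
    rw [hA1 hlam, h.marginal_snd] at hin
    calc
      (∫ z, Qs d lam q (z, x) (z, y))
        = (((lam ^ d)⁻¹ : ℝ) : ℂ) * ∫ z : E1 d,
            (fun u : E1 d => q (u, (Real.sqrt lam)⁻¹ • x) (u, (Real.sqrt lam)⁻¹ • y))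
              ((Real.sqrt lam)⁻¹ • z) := by
          rw [← integral_const_mul]
          refine integral_congr_ae (Filter.Eventually.of_forall fun z => ?_)
          simp only [Qs, Prod.smul_mk]
      _ = kernelScale lam b x y := by
          rw [hin, Complex.real_smul, kernelScale]
          rw [show (Fintype.card (Fin d) : ℝ) = (d : ℝ) by simp]
          rw [← const_marg hlam]
          push_cast
          ring

end Coupling

open scoped Pointwise

section Inv

variable {d : ℕ} {lam : ℝ}

lemma kernelScale_inv (hlam : 0 < lam) (a : E1 d → E1 d → ℂ) :
    kernelScale lam⁻¹ (kernelScale lam a) = a := by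
  funext x y
  have hsq : Real.sqrt lam ≠ 0 := hsqrt_ne hlam
  have hpre : ((lam⁻¹ : ℝ) ^ (-(Fintype.card (Fin d) : ℝ) / 2)) *
      (lam ^ (-(Fintype.card (Fin d) : ℝ) / 2)) = 1 := by
    rw [← Real.mul_rpow (inv_nonneg.2 hlam.le) hlam.le, inv_mul_cancel₀ hlam.ne',
      Real.one_rpow]
  simp only [kernelScale, Real.sqrt_inv, inv_inv]
  rw [inv_smul_smul₀ hsq, inv_smul_smul₀ hsq, ← mul_assoc, ← Complex.ofReal_mul,
    hpre, Complex.ofReal_one, one_mul]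

lemma Qs_inv (hlam : 0 < lam) (q : E2 d → E2 d → ℂ) :
    Qs d lam (Qs d lam⁻¹ q) = q := by
  funext z w
  have hsq : Real.sqrt lam ≠ 0 := hsqrt_ne hlam
  have hld : (lam : ℝ) ^ d ≠ 0 := pow_ne_zero _ hlam.ne'
  have hpre : (((lam : ℝ) ^ d)⁻¹ * ((lam⁻¹ : ℝ) ^ d)⁻¹) = 1 := by
    rw [inv_pow, inv_inv, inv_mul_cancel₀ hld]
  simp only [Qs, Real.sqrt_inv, inv_inv]
  rw [smul_inv_smul₀ hsq, smul_inv_smul₀ hsq, ← mul_assoc, ← Complex.ofReal_mul,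
    hpre, Complex.ofReal_one, one_mul]

end Inv

/-- Scaling property: `MK_λ(R^λ, (R')^λ)² = λ · MK_1(R, R')²` for density operators
`R, R'` with finite second moments. -/
theorem MKsq_scaling (d : ℕ) (lam : ℝ) (hlam : 0 < lam)
    (r r' : EuclideanSpace ℝ (Fin d) → EuclideanSpace ℝ (Fin d) → ℂ)
    (hr : IsDensity2 r) (hr' : IsDensity2 r') :
    MKsq lam (kernelScale lam r) (kernelScale lam r') = lam * MKsq 1 r r' := by
  have hS : {q : E2 d → E2 d → ℂ | IsCoupling (kernelScale lam r) (kernelScale lam r') q}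
      = Qs d lam '' {q | IsCoupling r r' q} := by
    ext q
    constructor
    · intro hq
      refine ⟨Qs d lam⁻¹ q, ?_, Qs_inv hlam q⟩
      have h2 := isCoupling_Qs (inv_pos.2 hlam) hq
      rwa [kernelScale_inv hlam r, kernelScale_inv hlam r'] at h2
    · rintro ⟨p, hp, rfl⟩
      exact isCoupling_Qs hlam hp
  unfold MKsq
  rw [hS, Set.image_image]
  have hfun : (fun q : E2 d → E2 d → ℂ => mkCost lam (Qs d lam q))
      = fun q : E2 d → E2 d → ℂ => lam * mkCost 1 q :=
    funext fun q => mkCost_Qs hlam q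
  rw [hfun]
  have himg : (fun q : E2 d → E2 d → ℂ => lam * mkCost 1 q) '' {q | IsCoupling r r' q}
      = lam • (mkCost 1 '' {q : E2 d → E2 d → ℂ | IsCoupling r r' q}) := by
    rw [show (fun q : E2 d → E2 d → ℂ => lam * mkCost 1 q)
        = (fun x : ℝ => lam • x) ∘ (fun q : E2 d → E2 d → ℂ => mkCost 1 q) by
      funext q; simp [smul_eq_mul]]
    rw [Set.image_comp, Set.image_smul]
  rw [himg, Real.sInf_smul_of_nonneg hlam.le, smul_eq_mul]
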